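/- (Compositionality of security, bounded time) Let 𝕊 and 𝕊′ be quantum systems with disjoint command sets C ∩ C′ = ∅, let ↝ (on A) and ↝′ (on A′) be compatible policies, and let t ≥ 0 be a natural number. Then K_t(𝕊 ⊗ 𝕊′, ↝ ∪ ↝′) ≤ K_t(𝕊, ↝) + K_t(𝕊′, ↝′). -/

import Mathlib

open scoped Classical ComplexOrder
open Matrix Kronecker

noncomputable section

/-- A density operator: positive semidefinite with trace 1. -/
def IsDensity {d : Type} [Fintype d] [DecidableEq d] (ρ : Matrix d d ℂ) : Prop :=
  ρ.PosSemidef ∧ ρ.trace = 1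

/-- A super-operator: a linear, positive, trace-preserving map on matrices. -/
def IsSuperOp {d : Type} [Fintype d] [DecidableEq d]
    (F : Matrix d d ℂ → Matrix d d ℂ) : Prop :=
  IsLinearMap ℂ F ∧ (∀ ρ : Matrix d d ℂ, ρ.PosSemidef → (F ρ).PosSemidef) ∧
    (∀ ρ : Matrix d d ℂ, (F ρ).trace = ρ.trace)

/-- A finite family of matrices (the data of a measurement). -/
structure PMeas (d : Type) where
  m : ℕ
  E : Fin m → Matrix d d ℂ

/-- The family is a POVM: positive semidefinite elements summing to the identity. -/
def PMeas.IsPOVM {d : Type} [Fintype d] [DecidableEq d] (P : PMeas d) : Prop :=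
  (∀ i, (P.E i).PosSemidef) ∧ ∑ i, P.E i = 1

/-- The distance between outcome distributions of a measurement on two states. -/
def dE {d : Type} [Fintype d] (P : PMeas d) (ρ σ : Matrix d d ℂ) : ℝ :=
  (1 / 2) * ∑ i, ‖(P.E i * ρ).trace - (P.E i * σ).trace‖

/-- The measurement pseudo-distance induced by a set of measurements. -/
def dM {d : Type} [Fintype d] (M : Set (PMeas d)) (ρ σ : Matrix d d ℂ) : ℝ :=
  sSup { x | ∃ P ∈ M, x = dE P ρ σ }

/-- A quantum system: initial state, agents, commands, super-operators, measurements. -/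
structure QSystem (Agent Cmd d : Type) where
  ρ0 : Matrix d d ℂ
  A : Set Agent
  C : Set Cmd
  Ecmd : Agent → Cmd → Matrix d d ℂ → Matrix d d ℂ
  M : Agent → Set (PMeas d)

/-- Well-formedness: the initial state is a density operator, commands act as
super-operators, and agents measure with POVMs. -/
def QSystem.WellFormed {Agent Cmd d : Type} [Fintype d] [DecidableEq d]
    (S : QSystem Agent Cmd d) : Prop :=
  IsDensity S.ρ0 ∧ (∀ a ∈ S.A, ∀ c ∈ S.C, IsSuperOp (S.Ecmd a c)) ∧
    (∀ a ∈ S.A, ∀ P ∈ S.M a, P.IsPOVM)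

/-- Execution of a finite action sequence (composition of super-operators, in order). -/
def QSystem.run {Agent Cmd d : Type} (S : QSystem Agent Cmd d)
    (α : List (Agent × Cmd)) (ρ : Matrix d d ℂ) : Matrix d d ℂ :=
  α.foldl (fun τ p => S.Ecmd p.1 p.2 τ) ρ

/-- A sequence over A × C. -/
def QSystem.Valid {Agent Cmd d : Type} (S : QSystem Agent Cmd d)
    (α : List (Agent × Cmd)) : Prop :=
  ∀ p ∈ α, p.1 ∈ S.A ∧ p.2 ∈ S.C

/-- `purge G D α` deletes from `α` every pair `(a, c)` with `a ∈ G` and `c ∈ D`. -/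
def purge {Agent Cmd : Type} (G : Set Agent) (D : Set Cmd) :
    List (Agent × Cmd) → List (Agent × Cmd)
  | [] => []
  | p :: rest => if p.1 ∈ G ∧ p.2 ∈ D then purge G D rest else p :: purge G D rest

/-- A reachable density operator. -/
def QSystem.Reachable {Agent Cmd d : Type} (S : QSystem Agent Cmd d)
    (ρ : Matrix d d ℂ) : Prop :=
  ∃ α, S.Valid α ∧ S.run α S.ρ0 = ρ

/-- `∇ a`: the set of agents from which information may not flow to `a`. -/
def nabla {Agent : Type} (pol : Agent → Agent → Prop) (a : Agent) : Set Agent :=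
  { b | ¬ pol b a }

/-- The security degree `K(𝕊,↝)`. -/
def Kdeg {Agent Cmd d : Type} [Fintype d] (S : QSystem Agent Cmd d)
    (pol : Agent → Agent → Prop) : ℝ :=
  sSup { x | ∃ a ∈ S.A, ∃ α, S.Valid α ∧
    x = dM (S.M a) (S.run α S.ρ0) (S.run (purge (nabla pol a) Set.univ α) S.ρ0) }

/-- The `t`-bounded security degree `K_t(𝕊,↝)`. -/
def Kt {Agent Cmd d : Type} [Fintype d] (S : QSystem Agent Cmd d)
    (pol : Agent → Agent → Prop) (t : ℕ) : ℝ :=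
  sSup { x | ∃ a ∈ S.A, ∃ α, S.Valid α ∧ α.length ≤ t ∧
    x = dM (S.M a) (S.run α S.ρ0) (S.run (purge (nabla pol a) Set.univ α) S.ρ0) }

/-- The interference degree `Int(G₁, D | G₂)`. -/
def IntDeg {Agent Cmd d : Type} [Fintype d] (S : QSystem Agent Cmd d)
    (G1 : Set Agent) (D : Set Cmd) (G2 : Set Agent) : ℝ :=
  sSup { x | ∃ a ∈ G2, ∃ α, S.Valid α ∧
    x = dM (S.M a) (S.run α S.ρ0) (S.run (purge G1 D α) S.ρ0) }

/-- Trace distance `d(ρ,σ) = (1/2)·tr √((ρ−σ)†(ρ−σ))`. -/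
def traceDist {d : Type} [Fintype d] [DecidableEq d] (ρ σ : Matrix d d ℂ) : ℝ :=
  (1 / 2) * (((Matrix.posSemidef_conjTranspose_mul_self (ρ - σ)).1.eigenvectorUnitary.1 *
    diagonal (((↑) : ℝ → ℂ) ∘ (√·) ∘ (Matrix.posSemidef_conjTranspose_mul_self (ρ - σ)).1.eigenvalues) *
    (star (Matrix.posSemidef_conjTranspose_mul_self (ρ - σ)).1.eigenvectorUnitary :
      Matrix d d ℂ)).trace).re

end
noncomputable section

/-- Lift a measurement on the first subsystem to the composite system: `E_λ ↦ E_λ ⊗ I`. -/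
def PMeas.liftLeft {d1 d2 : Type} [Fintype d2] [DecidableEq d2]
    (P : PMeas d1) : PMeas (d1 × d2) where
  m := P.m
  E := fun i => P.E i ⊗ₖ (1 : Matrix d2 d2 ℂ)

/-- Lift a measurement on the second subsystem to the composite system: `E_λ ↦ I ⊗ E_λ`. -/
def PMeas.liftRight {d1 d2 : Type} [Fintype d1] [DecidableEq d1]
    (P : PMeas d2) : PMeas (d1 × d2) where
  m := P.m
  E := fun i => (1 : Matrix d1 d1 ℂ) ⊗ₖ P.E i

/-- The map `𝓔 ⊗ id` on the composite system, for `𝓔` acting on the first factor. -/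
def superLiftLeft {d1 d2 : Type} (F : Matrix d1 d1 ℂ → Matrix d1 d1 ℂ) :
    Matrix (d1 × d2) (d1 × d2) ℂ → Matrix (d1 × d2) (d1 × d2) ℂ :=
  fun σ => Matrix.of fun p q =>
    F (Matrix.of fun i j => σ (i, p.2) (j, q.2)) p.1 q.1

/-- The map `id ⊗ 𝓔′` on the composite system, for `𝓔′` acting on the second factor. -/
def superLiftRight {d1 d2 : Type} (F : Matrix d2 d2 ℂ → Matrix d2 d2 ℂ) :
    Matrix (d1 × d2) (d1 × d2) ℂ → Matrix (d1 × d2) (d1 × d2) ℂ :=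
  fun σ => Matrix.of fun p q =>
    F (Matrix.of fun k l => σ (p.1, k) (q.1, l)) p.2 q.2

/-- The composition `𝕊 ⊗ 𝕊′` of two quantum systems. -/
def QSystem.comp {Agent Cmd d1 d2 : Type}
    [Fintype d1] [DecidableEq d1] [Fintype d2] [DecidableEq d2]
    (S : QSystem Agent Cmd d1) (S' : QSystem Agent Cmd d2) :
    QSystem Agent Cmd (d1 × d2) where
  ρ0 := S.ρ0 ⊗ₖ S'.ρ0
  A := S.A ∪ S'.A
  C := S.C ∪ S'.C
  Ecmd := fun a c =>
    if a ∈ S.A ∧ c ∈ S.C then superLiftLeft (S.Ecmd a c)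
    else if a ∈ S'.A ∧ c ∈ S'.C then superLiftRight (S'.Ecmd a c)
    else id
  M := fun a =>
    (if a ∈ S.A then PMeas.liftLeft '' S.M a else ∅) ∪
    (if a ∈ S'.A then PMeas.liftRight '' S'.M a else ∅)

/-- Two policies are compatible if they agree on common agents. -/
def Compatible {Agent : Type} (A A' : Set Agent)
    (pol pol' : Agent → Agent → Prop) : Prop :=
  ∀ a ∈ A ∩ A', ∀ b ∈ A ∩ A', (pol a b ↔ pol' a b)

/-- The union `↝ ∪ ↝′` of a policy on `A` and a policy on `A′`. -/
def polUnion {Agent : Type} (A A' : Set Agent)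
    (pol pol' : Agent → Agent → Prop) : Agent → Agent → Prop :=
  fun a b => (a ∈ A ∧ b ∈ A ∧ pol a b) ∨ (a ∈ A' ∧ b ∈ A' ∧ pol' a b)

end
noncomputable section

section Aux

variable {Agent Cmd : Type}

/-- Diagonal entries of a psd matrix are nonnegative. -/
lemma auxDiagNonneg {d : Type} [Fintype d] [DecidableEq d] {M : Matrix d d ℂ}
    (hM : M.PosSemidef) (i : d) : 0 ≤ M i i := by
  exact hM.diag_nonneg

/-- The trace of a psd matrix is nonnegative. -/
lemma auxTraceNonneg {d : Type} [Fintype d] [DecidableEq d] {M : Matrix d d ℂ}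
    (hM : M.PosSemidef) : 0 ≤ M.trace := by
  rw [Matrix.trace]
  exact Finset.sum_nonneg fun i _ => auxDiagNonneg hM i

open scoped MatrixOrder in
/-- `tr(Eρ) ≥ 0` for psd `E`, `ρ`. -/
lemma auxTraceMulNonneg {d : Type} [Fintype d] [DecidableEq d] {E ρ : Matrix d d ℂ}
    (hE : E.PosSemidef) (hρ : ρ.PosSemidef) : 0 ≤ (E * ρ).trace := by
  obtain ⟨B, rfl⟩ := CStarAlgebra.nonneg_iff_eq_star_mul_self.mp hE.nonneg
  rw [star_eq_conjTranspose, Matrix.mul_assoc, Matrix.trace_mul_comm]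
  exact auxTraceNonneg (hρ.mul_mul_conjTranspose_same B)

lemma auxAbsOfNonneg {z : ℂ} (h : 0 ≤ z) : ‖z‖ = z.re := by
  obtain ⟨h1, h2⟩ := Complex.nonneg_iff.mp h
  rw [Complex.norm_def, Complex.normSq_apply, ← h2]
  simpa [← pow_two] using Real.sqrt_sq h1

lemma dE_nonneg {d : Type} [Fintype d] (P : PMeas d) (ρ σ : Matrix d d ℂ) :
    0 ≤ dE P ρ σ := by
  unfold dE
  positivity

lemma dE_le_one {d : Type} [Fintype d] [DecidableEq d] {P : PMeas d} (hP : P.IsPOVM)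
    {ρ σ : Matrix d d ℂ} (hρ : IsDensity ρ) (hσ : IsDensity σ) : dE P ρ σ ≤ 1 := by
  have key : ∀ τ : Matrix d d ℂ, IsDensity τ →
      (∑ i, ((P.E i * τ).trace).re) = 1 ∧ ∀ i, 0 ≤ (P.E i * τ).trace := by
    intro τ hτ
    constructor
    · have : ∑ i, (P.E i * τ).trace = 1 := by
        rw [← Matrix.trace_sum, ← Finset.sum_mul, hP.2, one_mul, hτ.2]
      calc (∑ i, ((P.E i * τ).trace).re) = (∑ i, (P.E i * τ).trace).re :=
            (Complex.re_sum _ _).symm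
        _ = 1 := by rw [this]; simp
    · exact fun i => auxTraceMulNonneg (hP.1 i) hτ.1
  obtain ⟨hρ1, hρ2⟩ := key ρ hρ
  obtain ⟨hσ1, hσ2⟩ := key σ hσ
  unfold dE
  have hsum : ∑ i, ‖(P.E i * ρ).trace - (P.E i * σ).trace‖ ≤ 2 := by
    calc ∑ i, ‖(P.E i * ρ).trace - (P.E i * σ).trace‖
        ≤ ∑ i, (((P.E i * ρ).trace).re + ((P.E i * σ).trace).re) := by
          refine Finset.sum_le_sum fun i _ => ?_
          calc ‖(P.E i * ρ).trace - (P.E i * σ).trace‖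
              ≤ ‖(P.E i * ρ).trace‖ + ‖(P.E i * σ).trace‖ :=
                norm_sub_le _ _
            _ = _ := by rw [auxAbsOfNonneg (hρ2 i), auxAbsOfNonneg (hσ2 i)]
      _ = 2 := by rw [Finset.sum_add_distrib, hρ1, hσ1]; norm_num
  linarith

lemma dM_nonneg {d : Type} [Fintype d] (M : Set (PMeas d)) (ρ σ : Matrix d d ℂ) :
    0 ≤ dM M ρ σ := by
  refine Real.sSup_nonneg fun x hx => ?_
  obtain ⟨P, _, rfl⟩ := hx
  exact dE_nonneg P ρ σ

lemma dM_le_one {d : Type} [Fintype d] [DecidableEq d] {M : Set (PMeas d)}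
    (hM : ∀ P ∈ M, P.IsPOVM) {ρ σ : Matrix d d ℂ}
    (hρ : IsDensity ρ) (hσ : IsDensity σ) : dM M ρ σ ≤ 1 := by
  refine Real.sSup_le ?_ zero_le_one
  rintro x ⟨P, hP, rfl⟩
  exact dE_le_one (hM P hP) hρ hσ

lemma dE_le_dM {d : Type} [Fintype d] [DecidableEq d] {M : Set (PMeas d)}
    (hM : ∀ P ∈ M, P.IsPOVM) {ρ σ : Matrix d d ℂ}
    (hρ : IsDensity ρ) (hσ : IsDensity σ) {P : PMeas d} (hP : P ∈ M) :
    dE P ρ σ ≤ dM M ρ σ := by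
  refine le_csSup ⟨1, ?_⟩ ⟨P, hP, rfl⟩
  rintro x ⟨Q, hQ, rfl⟩
  exact dE_le_one (hM Q hQ) hρ hσ

lemma run_cons {d : Type} (S : QSystem Agent Cmd d) (p : Agent × Cmd)
    (α : List (Agent × Cmd)) (ρ : Matrix d d ℂ) :
    S.run (p :: α) ρ = S.run α (S.Ecmd p.1 p.2 ρ) := rfl

lemma run_trace {d : Type} [Fintype d] [DecidableEq d] {S : QSystem Agent Cmd d}
    (hS : S.WellFormed) (α : List (Agent × Cmd)) (hα : S.Valid α) :
    ∀ ρ : Matrix d d ℂ, (S.run α ρ).trace = ρ.trace := by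
  induction α with
  | nil => intro ρ; rfl
  | cons p rest ih =>
    intro ρ
    have hp := hα p List.mem_cons_self
    have hrest : S.Valid rest := fun q hq => hα q (List.mem_cons_of_mem _ hq)
    rw [run_cons, ih hrest, (hS.2.1 p.1 hp.1 p.2 hp.2).2.2]

lemma run_density {d : Type} [Fintype d] [DecidableEq d] {S : QSystem Agent Cmd d}
    (hS : S.WellFormed) (α : List (Agent × Cmd)) (hα : S.Valid α) :
    ∀ ρ : Matrix d d ℂ, IsDensity ρ → IsDensity (S.run α ρ) := by
  induction α with
  | nil => intro ρ h; exact h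
  | cons p rest ih =>
    intro ρ h
    have hp := hα p List.mem_cons_self
    have hrest : S.Valid rest := fun q hq => hα q (List.mem_cons_of_mem _ hq)
    rw [run_cons]
    refine ih hrest _ ⟨(hS.2.1 p.1 hp.1 p.2 hp.2).2.1 ρ h.1, ?_⟩
    rw [(hS.2.1 p.1 hp.1 p.2 hp.2).2.2, h.2]

lemma purge_sublist (G : Set Agent) (D : Set Cmd) (α : List (Agent × Cmd)) :
    (purge G D α).Sublist α := by
  induction α with
  | nil => simp [purge]
  | cons p rest ih =>
    by_cases h : p.1 ∈ G ∧ p.2 ∈ D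
    · rw [purge, if_pos h]; exact ih.cons p
    · rw [purge, if_neg h]; exact ih.cons₂ p

lemma valid_of_sublist {d : Type} {S : QSystem Agent Cmd d}
    {α β : List (Agent × Cmd)} (h : β.Sublist α) (hα : S.Valid α) : S.Valid β :=
  fun p hp => hα p (h.subset hp)

lemma purge_filter_comm (G G' : Set Agent) (q : Agent × Cmd → Bool)
    (h : ∀ p : Agent × Cmd, q p = true → (p.1 ∈ G ↔ p.1 ∈ G')) (α : List (Agent × Cmd)) :
    (purge G Set.univ α).filter q = purge G' Set.univ (α.filter q) := by
  induction α with
  | nil => rfl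
  | cons p rest ih =>
    by_cases hq : q p = true
    · by_cases hG : p.1 ∈ G
      · have hG' : p.1 ∈ G' := (h p hq).mp hG
        simp [purge, List.filter_cons, hq, hG, hG', ih]
      · have hG' : p.1 ∉ G' := fun hx => hG ((h p hq).mpr hx)
        simp [purge, List.filter_cons, hq, hG, hG', ih]
    · by_cases hG : p.1 ∈ G
      · simp [purge, List.filter_cons, hq, hG, ih]
      · simp [purge, List.filter_cons, hq, hG, ih]

lemma superLiftLeft_kron {d1 d2 : Type}
    {F : Matrix d1 d1 ℂ → Matrix d1 d1 ℂ} (hF : IsLinearMap ℂ F)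
    (ρ : Matrix d1 d1 ℂ) (σ : Matrix d2 d2 ℂ) :
    superLiftLeft F (ρ ⊗ₖ σ) = (F ρ) ⊗ₖ σ := by
  ext ⟨i, k⟩ ⟨j, l⟩
  show F (Matrix.of fun i' j' => (ρ ⊗ₖ σ) (i', k) (j', l)) i j = (F ρ) i j * σ k l
  have h1 : (Matrix.of fun i' j' => (ρ ⊗ₖ σ) (i', k) (j', l)) = σ k l • ρ := by
    ext i' j'
    simp [Matrix.kroneckerMap_apply, mul_comm]
  rw [h1, hF.map_smul]
  simp [mul_comm]

lemma superLiftRight_kron {d1 d2 : Type}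
    {F : Matrix d2 d2 ℂ → Matrix d2 d2 ℂ} (hF : IsLinearMap ℂ F)
    (ρ : Matrix d1 d1 ℂ) (σ : Matrix d2 d2 ℂ) :
    superLiftRight F (ρ ⊗ₖ σ) = ρ ⊗ₖ (F σ) := by
  ext ⟨i, k⟩ ⟨j, l⟩
  show F (Matrix.of fun k' l' => (ρ ⊗ₖ σ) (i, k') (j, l')) k l = ρ i j * (F σ) k l
  have h1 : (Matrix.of fun k' l' => (ρ ⊗ₖ σ) (i, k') (j, l')) = ρ i j • σ := by
    ext k' l'
    simp [Matrix.kroneckerMap_apply]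
  rw [h1, hF.map_smul]
  simp

lemma comp_run_split {d1 d2 : Type} [Fintype d1] [DecidableEq d1]
    [Fintype d2] [DecidableEq d2]
    (S : QSystem Agent Cmd d1) (S' : QSystem Agent Cmd d2)
    (hS : S.WellFormed) (hS' : S'.WellFormed) (hC : S.C ∩ S'.C = ∅)
    (α : List (Agent × Cmd)) :
    ∀ (ρ : Matrix d1 d1 ℂ) (σ : Matrix d2 d2 ℂ),
    (S.comp S').run α (ρ ⊗ₖ σ) =
      (S.run (α.filter fun p => decide (p.1 ∈ S.A ∧ p.2 ∈ S.C)) ρ) ⊗ₖ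
        (S'.run (α.filter fun p => decide (p.1 ∈ S'.A ∧ p.2 ∈ S'.C)) σ) := by
  induction α with
  | nil => intro ρ σ; rfl
  | cons p rest ih =>
    intro ρ σ
    by_cases hL : p.1 ∈ S.A ∧ p.2 ∈ S.C
    · have hR : ¬(p.1 ∈ S'.A ∧ p.2 ∈ S'.C) := by
        rintro ⟨_, hc'⟩
        have : p.2 ∈ S.C ∩ S'.C := ⟨hL.2, hc'⟩
        rw [hC] at this
        exact this
      have hE : (S.comp S').Ecmd p.1 p.2 (ρ ⊗ₖ σ) =
          superLiftLeft (S.Ecmd p.1 p.2) (ρ ⊗ₖ σ) := by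
        simp [QSystem.comp, hL]
      rw [run_cons, hE, superLiftLeft_kron (hS.2.1 p.1 hL.1 p.2 hL.2).1, ih]
      simp [run_cons, List.filter_cons, hL, hR]
    · by_cases hR : p.1 ∈ S'.A ∧ p.2 ∈ S'.C
      · have hE : (S.comp S').Ecmd p.1 p.2 (ρ ⊗ₖ σ) =
            superLiftRight (S'.Ecmd p.1 p.2) (ρ ⊗ₖ σ) := by
          simp [QSystem.comp, hL, hR]
        rw [run_cons, hE, superLiftRight_kron (hS'.2.1 p.1 hR.1 p.2 hR.2).1, ih]
        simp [run_cons, List.filter_cons, hL, hR]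
      · have hE : (S.comp S').Ecmd p.1 p.2 (ρ ⊗ₖ σ) = ρ ⊗ₖ σ := by
          simp [QSystem.comp, hL, hR]
        rw [run_cons, hE, ih]
        simp [run_cons, List.filter_cons, hL, hR]

lemma dE_liftLeft {d1 d2 : Type} [Fintype d1] [DecidableEq d1]
    [Fintype d2] [DecidableEq d2] (P : PMeas d1)
    (ρ1 σ1 : Matrix d1 d1 ℂ) {ρ2 σ2 : Matrix d2 d2 ℂ}
    (h2 : ρ2.trace = 1) (h2' : σ2.trace = 1) :
    dE P.liftLeft (ρ1 ⊗ₖ ρ2) (σ1 ⊗ₖ σ2) = dE P ρ1 σ1 := by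
  simp [dE, PMeas.liftLeft, ← Matrix.mul_kronecker_mul, Matrix.trace_kronecker, h2, h2']
  rfl

lemma dE_liftRight {d1 d2 : Type} [Fintype d1] [DecidableEq d1]
    [Fintype d2] [DecidableEq d2] (P : PMeas d2)
    {ρ1 σ1 : Matrix d1 d1 ℂ} (ρ2 σ2 : Matrix d2 d2 ℂ)
    (h1 : ρ1.trace = 1) (h1' : σ1.trace = 1) :
    dE P.liftRight (ρ1 ⊗ₖ ρ2) (σ1 ⊗ₖ σ2) = dE P ρ2 σ2 := by
  simp [dE, PMeas.liftRight, ← Matrix.mul_kronecker_mul, Matrix.trace_kronecker, h1, h1']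
  rfl

lemma valid_filter_left {d1 : Type} (S : QSystem Agent Cmd d1)
    (α : List (Agent × Cmd)) :
    S.Valid (α.filter fun p => decide (p.1 ∈ S.A ∧ p.2 ∈ S.C)) := by
  intro p hp
  exact of_decide_eq_true (List.mem_filter.mp hp).2

lemma Kt_bddAbove {d : Type} [Fintype d] [DecidableEq d]
    {S : QSystem Agent Cmd d} (hS : S.WellFormed)
    (pol : Agent → Agent → Prop) (t : ℕ) :
    ∀ x ∈ { x | ∃ a ∈ S.A, ∃ α, S.Valid α ∧ α.length ≤ t ∧
      x = dM (S.M a) (S.run α S.ρ0) (S.run (purge (nabla pol a) Set.univ α) S.ρ0) },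
      x ≤ 1 := by
  rintro x ⟨a, ha, α, hval, _, rfl⟩
  exact dM_le_one (hS.2.2 a ha)
    (run_density hS α hval S.ρ0 hS.1)
    (run_density hS _ (valid_of_sublist (purge_sublist _ _ _) hval) S.ρ0 hS.1)

lemma Kt_nonneg {d : Type} [Fintype d] (S : QSystem Agent Cmd d)
    (pol : Agent → Agent → Prop) (t : ℕ) : 0 ≤ Kt S pol t := by
  refine Real.sSup_nonneg fun x hx => ?_
  obtain ⟨a, _, α, _, _, rfl⟩ := hx
  exact dM_nonneg _ _ _

end Aux

/-- **Compositionality of security (bounded time).** For quantum systems with disjoint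
command sets and compatible policies, for every `t`,
`K_t(𝕊 ⊗ 𝕊′, ↝ ∪ ↝′) ≤ K_t(𝕊, ↝) + K_t(𝕊′, ↝′)`. -/
theorem compositionality_Kt {Agent Cmd : Type} {n n' : ℕ} (hn : 0 < n) (hn' : 0 < n')
    (S : QSystem Agent Cmd (Fin n)) (S' : QSystem Agent Cmd (Fin n'))
    (hS : S.WellFormed) (hS' : S'.WellFormed)
    (hC : S.C ∩ S'.C = ∅)
    (pol pol' : Agent → Agent → Prop)
    (hpol : ∀ a ∈ S.A, pol a a) (hpol' : ∀ a ∈ S'.A, pol' a a)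
    (hcompat : Compatible S.A S'.A pol pol')
    (t : ℕ) :
    Kt (S.comp S') (polUnion S.A S'.A pol pol') t ≤ Kt S pol t + Kt S' pol' t := by
  classical
  have hbound : 0 ≤ Kt S pol t + Kt S' pol' t :=
    add_nonneg (Kt_nonneg S pol t) (Kt_nonneg S' pol' t)
  refine Real.sSup_le ?_ hbound
  rintro x ⟨a, ha, α, hval, hlen, rfl⟩
  set U := polUnion S.A S'.A pol pol' with hU
  set β := purge (nabla U a) Set.univ α with hβdef
  have hρ0 : (S.comp S').ρ0 = S.ρ0 ⊗ₖ S'.ρ0 := rfl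
  rw [hρ0, comp_run_split S S' hS hS' hC α, comp_run_split S S' hS hS' hC β]
  set dL : Agent × Cmd → Bool := fun p => decide (p.1 ∈ S.A ∧ p.2 ∈ S.C) with hdL
  set dR : Agent × Cmd → Bool := fun p => decide (p.1 ∈ S'.A ∧ p.2 ∈ S'.C) with hdR
  -- the four component runs
  have hvalαL : S.Valid (α.filter dL) := valid_filter_left S α
  have hvalβL : S.Valid (β.filter dL) := valid_filter_left S β
  have hvalαR : S'.Valid (α.filter dR) := valid_filter_left S' α
  have hvalβR : S'.Valid (β.filter dR) := valid_filter_left S' β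
  refine Real.sSup_le ?_ hbound
  rintro y ⟨P, hP, rfl⟩
  have hPmem : P ∈ (if a ∈ S.A then PMeas.liftLeft '' S.M a else ∅) ∪
      (if a ∈ S'.A then PMeas.liftRight '' S'.M a else ∅) := hP
  rcases hPmem with hP1 | hP1
  · -- left measurement
    by_cases haA : a ∈ S.A
    swap
    · rw [if_neg haA] at hP1; exact absurd hP1 (Set.notMem_empty P)
    rw [if_pos haA] at hP1
    obtain ⟨Q, hQ, rfl⟩ := hP1
    rw [dE_liftLeft Q _ _ (by rw [run_trace hS' _ hvalαR, hS'.1.2])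
      (by rw [run_trace hS' _ hvalβR, hS'.1.2])]
    -- purge commutes with the left filter
    have hpol_iff : ∀ b ∈ S.A, (U b a ↔ pol b a) := by
      intro b hb
      constructor
      · rintro (⟨_, _, h⟩ | ⟨hb', ha', h⟩)
        · exact h
        · exact (hcompat b ⟨hb, hb'⟩ a ⟨haA, ha'⟩).mpr h
      · intro h; exact Or.inl ⟨hb, haA, h⟩
    have hβL : β.filter dL = purge (nabla pol a) Set.univ (α.filter dL) := by
      rw [hβdef]
      exact purge_filter_comm (nabla U a) (nabla pol a) dL
        (fun p hp => not_congr (hpol_iff p.1 (of_decide_eq_true hp).1)) α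
    have hdens1 : IsDensity (S.run (α.filter dL) S.ρ0) :=
      run_density hS _ hvalαL S.ρ0 hS.1
    have hdens2 : IsDensity (S.run (β.filter dL) S.ρ0) :=
      run_density hS _ hvalβL S.ρ0 hS.1
    have h1 : dE Q (S.run (α.filter dL) S.ρ0) (S.run (β.filter dL) S.ρ0) ≤
        dM (S.M a) (S.run (α.filter dL) S.ρ0) (S.run (β.filter dL) S.ρ0) :=
      dE_le_dM (hS.2.2 a haA) hdens1 hdens2 hQ
    have h2 : dM (S.M a) (S.run (α.filter dL) S.ρ0) (S.run (β.filter dL) S.ρ0) ≤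
        Kt S pol t := by
      refine le_csSup ⟨1, Kt_bddAbove hS pol t⟩ ?_
      exact ⟨a, haA, α.filter dL, hvalαL,
        le_trans (List.length_filter_le _ _) hlen, by rw [hβL]⟩
    calc dE Q (S.run (α.filter dL) S.ρ0) (S.run (β.filter dL) S.ρ0)
        ≤ Kt S pol t := le_trans h1 h2
      _ ≤ Kt S pol t + Kt S' pol' t := le_add_of_nonneg_right (Kt_nonneg S' pol' t)
  · -- right measurement
    by_cases haA : a ∈ S'.A
    swap
    · rw [if_neg haA] at hP1; exact absurd hP1 (Set.notMem_empty P)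
    rw [if_pos haA] at hP1
    obtain ⟨Q, hQ, rfl⟩ := hP1
    rw [dE_liftRight Q _ _ (by rw [run_trace hS _ hvalαL, hS.1.2])
      (by rw [run_trace hS _ hvalβL, hS.1.2])]
    have hpol_iff : ∀ b ∈ S'.A, (U b a ↔ pol' b a) := by
      intro b hb
      constructor
      · rintro (⟨hb', ha', h⟩ | ⟨_, _, h⟩)
        · exact (hcompat b ⟨hb', hb⟩ a ⟨ha', haA⟩).mp h
        · exact h
      · intro h; exact Or.inr ⟨hb, haA, h⟩
    have hβR : β.filter dR = purge (nabla pol' a) Set.univ (α.filter dR) := by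
      rw [hβdef]
      exact purge_filter_comm (nabla U a) (nabla pol' a) dR
        (fun p hp => not_congr (hpol_iff p.1 (of_decide_eq_true hp).1)) α
    have hdens1 : IsDensity (S'.run (α.filter dR) S'.ρ0) :=
      run_density hS' _ hvalαR S'.ρ0 hS'.1
    have hdens2 : IsDensity (S'.run (β.filter dR) S'.ρ0) :=
      run_density hS' _ hvalβR S'.ρ0 hS'.1
    have h1 : dE Q (S'.run (α.filter dR) S'.ρ0) (S'.run (β.filter dR) S'.ρ0) ≤
        dM (S'.M a) (S'.run (α.filter dR) S'.ρ0) (S'.run (β.filter dR) S'.ρ0) :=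
      dE_le_dM (hS'.2.2 a haA) hdens1 hdens2 hQ
    have h2 : dM (S'.M a) (S'.run (α.filter dR) S'.ρ0) (S'.run (β.filter dR) S'.ρ0) ≤
        Kt S' pol' t := by
      refine le_csSup ⟨1, Kt_bddAbove hS' pol' t⟩ ?_
      exact ⟨a, haA, α.filter dR, hvalαR,
        le_trans (List.length_filter_le _ _) hlen, by rw [hβR]⟩
    calc dE Q (S'.run (α.filter dR) S'.ρ0) (S'.run (β.filter dR) S'.ρ0)
        ≤ Kt S' pol' t := le_trans h1 h2
      _ ≤ Kt S pol t + Kt S' pol' t := le_add_of_nonneg_left (Kt_nonneg S pol t)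

end
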